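/- Let M be a log-convex sequence with M₀ = 1 and quotients m_j := M_{j+1}/M_j, let L be a positive sequence with L₀ = 1, let 0 < α ≤ 2, and let f ∈ A_{{L}}(S_α) be such that for every j ∈ ℕ₀ the limit f^{(j)}(0) := lim_{z→0, z∈S_α} f^{(j)}(z) exists and the sequence (|f^{(j)}(0)|)_j is equivalent to L. Then the sequence of moduli of the limits at 0 of the derivatives of T_M(f) (which equal R_j·|f^{(j)}(0)| with R_j := ∑_{n=0}^∞ 2^{-n}·(M_n/m_n^n)·m_n^j) is equivalent to LM := (L_j·M_j)_j, and T_M(f) is characteristic in A_{{LM}}(S_α). -/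

import Mathlib

open Filter Complex Asymptotics
open scoped Topology BigOperators

noncomputable section

/-- The open sector in ℂ of opening `α·π` bisected by the positive real axis. -/
def Sector (α : ℝ) : Set ℂ := {z : ℂ | z ≠ 0 ∧ |Complex.arg z| < α * Real.pi / 2}

/-- The Roumieu ultraholomorphic class `A_{{M}}(S_α)`. -/
def ASet (M : ℕ → ℝ) (α : ℝ) : Set (ℂ → ℂ) :=
  {f | DifferentiableOn ℂ f (Sector α) ∧
    ∃ h > (0:ℝ), ∃ C : ℝ, ∀ j : ℕ, ∀ z ∈ Sector α,
      ‖iteratedDerivWithin j f (Sector α) z‖ ≤ C * h ^ j * M j}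

/-- Equivalence of sequences: `a_j ≤ A·B^j·b_j` and `b_j ≤ A·B^j·a_j`. -/
def SeqEquiv (a b : ℕ → ℝ) : Prop :=
  ∃ A > (0:ℝ), ∃ B > (0:ℝ), ∀ j : ℕ, a j ≤ A * B ^ j * b j ∧ b j ≤ A * B ^ j * a j

/-- Log-convexity: `L_j² ≤ L_{j-1}·L_{j+1}` for `j ≥ 1`. -/
def IsLogConvexSeq (L : ℕ → ℝ) : Prop := ∀ j : ℕ, L (j+1) ^ 2 ≤ L j * L (j+2)

/-- `Gbar s j = j^{s·j}` (with the convention `0⁰ = 1`, automatic for `rpow`). -/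
def Gbar (s : ℝ) (j : ℕ) : ℝ := (j : ℝ) ^ (s * (j : ℝ))

/-- Weight matrix: positive sequences, first term 1, nondecreasing in the parameter. -/
def IsWeightMatrix (M : ℝ → ℕ → ℝ) : Prop :=
  (∀ p > (0:ℝ), ∀ j : ℕ, 0 < M p j) ∧ (∀ p > (0:ℝ), M p 0 = 1) ∧
    (∀ p q : ℝ, 0 < p → p ≤ q → ∀ j : ℕ, M p j ≤ M q j)

/-- The class `A_{{𝓜}}(S_α)` associated with a weight matrix. -/
def AMatSet (M : ℝ → ℕ → ℝ) (α : ℝ) : Set (ℂ → ℂ) := {f | ∃ p > (0:ℝ), f ∈ ASet (M p) α}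

/-- `M̌_j = M_j/j!`. -/
def checkSeq (N : ℕ → ℝ) (j : ℕ) : ℝ := N j / (Nat.factorial j : ℝ)

/-- Condition `(𝓜_{rai})`. -/
def Mrai (M : ℝ → ℕ → ℝ) : Prop :=
  ∀ p > (0:ℝ), ∃ C > (0:ℝ), ∃ p' > (0:ℝ), ∀ j k : ℕ, 1 ≤ j → j ≤ k →
    (checkSeq (M p) j) ^ ((j:ℝ)⁻¹) ≤ C * (checkSeq (M p') k) ^ ((k:ℝ)⁻¹)

/-- Condition `(𝓜_{C^ω})`. -/
def MComega (M : ℝ → ℕ → ℝ) : Prop :=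
  ∃ p > (0:ℝ),
    0 < Filter.liminf (fun j : ℕ => (checkSeq (M p) j) ^ ((j:ℝ)⁻¹)) Filter.atTop

/-- Condition `(𝓜_{dc})`. -/
def Mdc (M : ℝ → ℕ → ℝ) : Prop :=
  ∀ p > (0:ℝ), ∃ C > (0:ℝ), ∃ p' > (0:ℝ), ∀ j : ℕ, M p (j+1) ≤ C ^ (j+1) * M p' j

/-- `N°_k`: maximum of `N_ℓ·N_{j₁}⋯N_{j_ℓ}` over `j_i ∈ ℕ, j₁+⋯+j_ℓ = k`; `N°₀ = 1`. -/
def circSeq (N : ℕ → ℝ) (k : ℕ) : ℝ :=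
  if k = 0 then 1 else
    sSup {x : ℝ | ∃ (l : ℕ) (js : Fin l → ℕ), (∀ i, 1 ≤ js i) ∧ (∑ i, js i) = k ∧
      x = N l * ∏ i, N (js i)}

/-- `(rai)` for a single sequence. -/
def SeqRai (N : ℕ → ℝ) : Prop :=
  ∃ C > (0:ℝ), ∀ j k : ℕ, 1 ≤ j → j ≤ k →
    (checkSeq N j) ^ ((j:ℝ)⁻¹) ≤ C * (checkSeq N k) ^ ((k:ℝ)⁻¹)

/-- `(dc)` for a single sequence. -/
def SeqDc (N : ℕ → ℝ) : Prop := ∃ D ≥ (1:ℝ), ∀ j : ℕ, N (j+1) ≤ D ^ (j+1) * N j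

/-- `(FdB)` for a single sequence. -/
def SeqFdB (N : ℕ → ℝ) : Prop :=
  ∃ C ≥ (1:ℝ), ∃ h ≥ (1:ℝ), ∀ j : ℕ, circSeq (checkSeq N) j ≤ C * h ^ j * checkSeq N j

/-- Condition `(𝓜_{FdB})`. -/
def MFdB (M : ℝ → ℕ → ℝ) : Prop :=
  ∀ p > (0:ℝ), ∃ p' > (0:ℝ), ∃ C : ℝ, ∀ k : ℕ, 1 ≤ k →
    (circSeq (checkSeq (M p)) k / checkSeq (M p') k) ^ ((k:ℝ)⁻¹) ≤ C

/-- `L` is the log-convex minorant of `a` (within positive log-convex sequences). -/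
def IsLcMinorant (a L : ℕ → ℝ) : Prop :=
  (∀ j, 0 < L j) ∧ IsLogConvexSeq L ∧ (∀ j, L j ≤ a j) ∧
    ∀ L' : ℕ → ℝ, (∀ j, 0 < L' j) → IsLogConvexSeq L' → (∀ j, L' j ≤ a j) → ∀ j, L' j ≤ L j

/-- Holomorphic closedness of a class of functions on `S_α`. -/
def HolClosed (S : Set (ℂ → ℂ)) (α : ℝ) : Prop :=
  ∀ f ∈ S, ∀ U : Set ℂ, IsOpen U → closure (f '' Sector α) ⊆ U →
    ∀ g : ℂ → ℂ, DifferentiableOn ℂ g U → g ∘ f ∈ S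

/-- Inverse closedness of a class of functions on `S_α`. -/
def InvClosed (S : Set (ℂ → ℂ)) (α : ℝ) : Prop :=
  ∀ f ∈ S, (∃ c > (0:ℝ), ∀ z ∈ Sector α, c ≤ ‖f z‖) → (fun z => (f z)⁻¹) ∈ S

/-- The class `H_{{𝓜}}(U)` for a weight matrix. -/
def HMatClass (M : ℝ → ℕ → ℝ) (U : Set ℂ) : Set (ℂ → ℂ) :=
  {g | DifferentiableOn ℂ g U ∧ ∀ K : Set ℂ, K ⊆ U → IsCompact K →
    ∃ p > (0:ℝ), ∃ h > (0:ℝ), ∃ C : ℝ, ∀ j : ℕ, ∀ z ∈ K,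
      ‖iteratedDerivWithin j g U z‖ ≤ C * h ^ j * M p j}

/-- The class `H_{{M}}(U)` for a single sequence. -/
def HSeqClass (N : ℕ → ℝ) (U : Set ℂ) : Set (ℂ → ℂ) :=
  {g | DifferentiableOn ℂ g U ∧ ∀ K : Set ℂ, K ⊆ U → IsCompact K →
    ∃ h > (0:ℝ), ∃ C : ℝ, ∀ j : ℕ, ∀ z ∈ K,
      ‖iteratedDerivWithin j g U z‖ ≤ C * h ^ j * N j}

/-- Closedness under composition for the matrix class. -/
def CompClosedMat (M : ℝ → ℕ → ℝ) (α : ℝ) : Prop :=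
  ∀ f ∈ AMatSet M α, ∀ U : Set ℂ, IsOpen U → closure (f '' Sector α) ⊆ U →
    ∀ g ∈ HMatClass M U, g ∘ f ∈ AMatSet M α

/-- Closedness under composition for a single-sequence class. -/
def CompClosedSeq (N : ℕ → ℝ) (α : ℝ) : Prop :=
  ∀ f ∈ ASet N α, ∀ U : Set ℂ, IsOpen U → closure (f '' Sector α) ⊆ U →
    ∀ g ∈ HSeqClass N U, g ∘ f ∈ ASet N α

/-- `f` is characteristic in `A_{{L}}(S_α)`. -/
def Characteristic (L : ℕ → ℝ) (α : ℝ) (f : ℂ → ℂ) : Prop :=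
  f ∈ ASet L α ∧ ∀ N : ℕ → ℝ, (∀ j, 0 < N j) → N 0 = 1 →
    f ∈ ASet N α → ASet N α ⊆ ASet L α → ASet N α = ASet L α

/-- Coefficient `2^{-n} M_n/m_n^n` of the `T_M`-transform. -/
def coefT (M : ℕ → ℝ) (n : ℕ) : ℝ := (1/2:ℝ)^n * (M n / (M (n+1) / M n) ^ n)

/-- The sequence of quotients `m_n = M_{n+1}/M_n`. -/
def quotSeq (M : ℕ → ℝ) (n : ℕ) : ℝ := M (n+1) / M n

/-- `R_j = ∑ 2^{-n}(M_n/m_n^n) m_n^j` (as a real tsum). -/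
def Rseq (M : ℕ → ℝ) (j : ℕ) : ℝ := ∑' n : ℕ, coefT M n * (quotSeq M n) ^ j

/-- The `T_M`-transform. -/
def Ttrans (M : ℕ → ℝ) (f : ℂ → ℂ) (z : ℂ) : ℂ :=
  ∑' n : ℕ, (coefT M n : ℂ) * f ((quotSeq M n : ℂ) * z)

/-- Weight function: continuous, nondecreasing, `ω(0)=0`, nonnegative, `ω(t)→∞`. -/
def IsWeightFunction (ω : ℝ → ℝ) : Prop :=
  ContinuousOn ω (Set.Ici 0) ∧ MonotoneOn ω (Set.Ici 0) ∧ ω 0 = 0 ∧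
    (∀ t ≥ (0:ℝ), 0 ≤ ω t) ∧ Filter.Tendsto ω Filter.atTop Filter.atTop

def Om0 (ω : ℝ → ℝ) : Prop := ∀ t ∈ Set.Icc (0:ℝ) 1, ω t = 0
def Om1 (ω : ℝ → ℝ) : Prop := ∃ L ≥ (1:ℝ), ∀ t ≥ (0:ℝ), ω (2*t) ≤ L * (ω t + 1)
def Om2 (ω : ℝ → ℝ) : Prop := ∃ C > (0:ℝ), ∃ t₀ : ℝ, ∀ t ≥ t₀, ω t ≤ C * t
def Om3 (ω : ℝ → ℝ) : Prop := Real.log =o[Filter.atTop] ω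
def Om4 (ω : ℝ → ℝ) : Prop := ConvexOn ℝ Set.univ (fun t => ω (Real.exp t))
def Om5 (ω : ℝ → ℝ) : Prop := ω =o[Filter.atTop] (fun t => t)
def Om6 (ω : ℝ → ℝ) : Prop := ∃ H ≥ (1:ℝ), ∀ t ≥ (0:ℝ), 2 * ω t ≤ ω (H * t) + H

/-- Condition `(α₀)` for a weight function. -/
def Alpha0 (ω : ℝ → ℝ) : Prop :=
  ∃ C ≥ (1:ℝ), ∃ t₀ ≥ (0:ℝ), ∀ lam ≥ (1:ℝ), ∀ t ≥ t₀, ω (lam * t) ≤ C * lam * ω t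

/-- The set `W₀`. -/
def InW0 (ω : ℝ → ℝ) : Prop := IsWeightFunction ω ∧ Om0 ω ∧ Om3 ω ∧ Om4 ω

/-- The set `W`. -/
def InW (ω : ℝ → ℝ) : Prop := InW0 ω ∧ Om1 ω

/-- The Legendre–Fenchel–Young conjugate `φ*_ω`. -/
def phiStar (ω : ℝ → ℝ) (x : ℝ) : ℝ :=
  sSup {r : ℝ | ∃ y : ℝ, 0 ≤ y ∧ r = x * y - ω (Real.exp y)}

/-- The weight matrix associated with `ω`: `W^{(ℓ)}_j = exp((1/ℓ)·φ*_ω(ℓj))`. -/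
def Wmat (ω : ℝ → ℝ) (ℓ : ℝ) (j : ℕ) : ℝ := Real.exp ((1/ℓ) * phiStar ω (ℓ * (j:ℝ)))

/-- The class `A_{{ω}}(S_α)`. -/
def AOmegaSet (ω : ℝ → ℝ) (α : ℝ) : Set (ℂ → ℂ) :=
  {f | DifferentiableOn ℂ f (Sector α) ∧ ∃ ℓ > (0:ℝ), ∃ C : ℝ,
    ∀ j : ℕ, ∀ z ∈ Sector α, ‖iteratedDerivWithin j f (Sector α) z‖ ≤ C * Wmat ω ℓ j}

/-- Closedness under composition for the `ω`-class. -/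
def CompClosedOmega (ω : ℝ → ℝ) (α : ℝ) : Prop :=
  ∀ f ∈ AOmegaSet ω α, ∀ U : Set ℂ, IsOpen U → closure (f '' Sector α) ⊆ U →
    ∀ g ∈ HMatClass (Wmat ω) U, g ∘ f ∈ AOmegaSet ω α

/-- One-sided matrix comparison `𝓜 {⪯} 𝓛`: `sup_{j≥1}(M^{(p)}_j/L^{(q)}_j)^{1/j} < ∞`. -/
def MatPreceq (M L : ℝ → ℕ → ℝ) : Prop :=
  ∀ p > (0:ℝ), ∃ q > (0:ℝ), ∃ C : ℝ, ∀ j : ℕ, 1 ≤ j → (M p j / L q j) ^ ((j:ℝ)⁻¹) ≤ C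

/-- `R`-equivalence of weight matrices. -/
def REquivMat (M L : ℝ → ℕ → ℝ) : Prop := MatPreceq M L ∧ MatPreceq L M


namespace Stmt5Aux


variable {M : ℕ → ℝ}

lemma quot_pos (hMpos : ∀ j, 0 < M j) (n : ℕ) : 0 < quotSeq M n :=
  div_pos (hMpos _) (hMpos _)

lemma quot_mono (hMpos : ∀ j, 0 < M j) (hMlc : IsLogConvexSeq M) : Monotone (quotSeq M) := by
  refine monotone_nat_of_le_succ fun n => ?_
  have h := hMlc n
  rw [quotSeq, quotSeq, div_le_div_iff₀ (hMpos n) (hMpos (n+1))]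
  nlinarith [hMpos n, hMpos (n+1), hMpos (n+2)]

lemma M_prod (hMpos : ∀ j, 0 < M j) (hM0 : M 0 = 1) (j : ℕ) :
    M j = ∏ k ∈ Finset.range j, quotSeq M k := by
  induction j with
  | zero => simpa using hM0
  | succ j ih =>
    rw [Finset.prod_range_succ, ← ih, quotSeq, mul_div_cancel₀ _ (hMpos j).ne']

lemma coefT_eq (n : ℕ) : coefT M n = (1/2:ℝ)^n * (M n / quotSeq M n ^ n) := rfl

lemma coefT_pos (hMpos : ∀ j, 0 < M j) (n : ℕ) : 0 < coefT M n := by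
  rw [coefT_eq]
  have h1 := quot_pos hMpos (M := M) n
  have h2 := hMpos n
  positivity

lemma key_ineq (hMpos : ∀ j, 0 < M j) (hM0 : M 0 = 1) (hMlc : IsLogConvexSeq M) (n j : ℕ) :
    M n * quotSeq M n ^ j ≤ M j * quotSeq M n ^ n := by
  set q := quotSeq M with hq
  have hqpos : ∀ k, 0 < q k := quot_pos hMpos
  rcases le_or_gt n j with hnj | hjn
  · have hsplit : (∏ k ∈ Finset.range j, q k) =
        (∏ k ∈ Finset.range n, q k) * ∏ k ∈ Finset.Ico n j, q k := by
      rw [Finset.range_eq_Ico, Finset.range_eq_Ico]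
      exact (Finset.prod_Ico_consecutive _ n.zero_le hnj).symm
    have hprodle : q n ^ (j - n) ≤ ∏ k ∈ Finset.Ico n j, q k := by
      have h0 : q n ^ (j - n) = ∏ _k ∈ Finset.Ico n j, q n := by
        rw [Finset.prod_const, Nat.card_Ico]
      rw [h0]
      exact Finset.prod_le_prod (fun k _ => (hqpos n).le)
        (fun k hk => quot_mono hMpos hMlc (Finset.mem_Ico.mp hk).1)
    have hpow : q n ^ j = q n ^ n * q n ^ (j - n) := by
      rw [← pow_add, Nat.add_sub_cancel' hnj]
    rw [M_prod hMpos hM0 n, M_prod hMpos hM0 j, ← hq, hsplit, hpow]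
    have h1 : 0 ≤ ∏ k ∈ Finset.range n, q k := Finset.prod_nonneg fun k _ => (hqpos k).le
    calc (∏ k ∈ Finset.range n, q k) * (q n ^ n * q n ^ (j - n))
        ≤ (∏ k ∈ Finset.range n, q k) * (q n ^ n * ∏ k ∈ Finset.Ico n j, q k) := by
          have h2 := mul_le_mul_of_nonneg_left hprodle (pow_pos (hqpos n) n).le
          exact mul_le_mul_of_nonneg_left h2 h1
      _ = (∏ k ∈ Finset.range n, q k) * (∏ k ∈ Finset.Ico n j, q k) * q n ^ n := by ring
  · have hsplit : (∏ k ∈ Finset.range n, q k) =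
        (∏ k ∈ Finset.range j, q k) * ∏ k ∈ Finset.Ico j n, q k := by
      rw [Finset.range_eq_Ico, Finset.range_eq_Ico]
      exact (Finset.prod_Ico_consecutive _ j.zero_le hjn.le).symm
    have hprodle : (∏ k ∈ Finset.Ico j n, q k) ≤ q n ^ (n - j) := by
      have h0 : q n ^ (n - j) = ∏ _k ∈ Finset.Ico j n, q n := by
        rw [Finset.prod_const, Nat.card_Ico]
      rw [h0]
      exact Finset.prod_le_prod (fun k _ => (hqpos k).le)
        (fun k hk => quot_mono hMpos hMlc (Finset.mem_Ico.mp hk).2.le)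
    have hpow : q n ^ n = q n ^ j * q n ^ (n - j) := by
      rw [← pow_add, Nat.add_sub_cancel' hjn.le]
    rw [M_prod hMpos hM0 n, M_prod hMpos hM0 j, ← hq, hsplit, hpow]
    have h1 : 0 ≤ ∏ k ∈ Finset.range j, q k := Finset.prod_nonneg fun k _ => (hqpos k).le
    calc (∏ k ∈ Finset.range j, q k) * (∏ k ∈ Finset.Ico j n, q k) * q n ^ j
        ≤ (∏ k ∈ Finset.range j, q k) * q n ^ (n - j) * q n ^ j := by
          have h2 := mul_le_mul_of_nonneg_left hprodle h1
          exact mul_le_mul_of_nonneg_right h2 (pow_pos (hqpos n) j).le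
      _ = (∏ k ∈ Finset.range j, q k) * (q n ^ j * q n ^ (n - j)) := by ring

lemma key (hMpos : ∀ j, 0 < M j) (hM0 : M 0 = 1) (hMlc : IsLogConvexSeq M) (n j : ℕ) :
    coefT M n * quotSeq M n ^ j ≤ (1/2:ℝ)^n * M j := by
  rw [coefT_eq]
  have hqp := quot_pos hMpos (M := M) n
  have h2 : (0:ℝ) < (1/2:ℝ)^n := by positivity
  rw [mul_assoc, div_mul_eq_mul_div, mul_le_mul_iff_right₀ h2,
    div_le_iff₀ (by positivity : (0:ℝ) < quotSeq M n ^ n)]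
  exact key_ineq hMpos hM0 hMlc n j

lemma term_pos (hMpos : ∀ j, 0 < M j) (n j : ℕ) : 0 < coefT M n * quotSeq M n ^ j :=
  mul_pos (coefT_pos hMpos n) (pow_pos (quot_pos hMpos n) j)

lemma summable_term (hMpos : ∀ j, 0 < M j) (hM0 : M 0 = 1) (hMlc : IsLogConvexSeq M) (j : ℕ) :
    Summable (fun n => coefT M n * quotSeq M n ^ j) :=
  Summable.of_nonneg_of_le (fun n => (term_pos hMpos n j).le)
    (fun n => key hMpos hM0 hMlc n j) (summable_geometric_two.mul_right _)

lemma Rseq_le (hMpos : ∀ j, 0 < M j) (hM0 : M 0 = 1) (hMlc : IsLogConvexSeq M) (j : ℕ) :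
    Rseq M j ≤ 2 * M j := by
  calc Rseq M j ≤ ∑' n : ℕ, (1/2:ℝ)^n * M j :=
        Summable.tsum_le_tsum (key hMpos hM0 hMlc · j) (summable_term hMpos hM0 hMlc j)
          (summable_geometric_two.mul_right _)
    _ = (∑' n : ℕ, (1/2:ℝ)^n) * M j := tsum_mul_right
    _ = 2 * M j := by rw [tsum_geometric_two]

lemma Rseq_ge (hMpos : ∀ j, 0 < M j) (hM0 : M 0 = 1) (hMlc : IsLogConvexSeq M) (j : ℕ) :
    (1/2:ℝ)^j * M j ≤ Rseq M j := by
  have h := Summable.le_tsum (summable_term hMpos hM0 hMlc j) j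
    (fun n _ => (term_pos hMpos n j).le)
  calc (1/2:ℝ)^j * M j = coefT M j * quotSeq M j ^ j := by
        rw [coefT_eq, mul_assoc, div_mul_cancel₀]
        exact (pow_pos (quot_pos hMpos j) j).ne'
    _ ≤ Rseq M j := h

lemma Rseq_pos (hMpos : ∀ j, 0 < M j) (hM0 : M 0 = 1) (hMlc : IsLogConvexSeq M) (j : ℕ) :
    0 < Rseq M j :=
  lt_of_lt_of_le (by have := hMpos j; positivity) (Rseq_ge hMpos hM0 hMlc j)


lemma sector_eq {α : ℝ} (hα : 0 < α) (hα2 : α ≤ 2) :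
    Sector α = Complex.exp '' (Complex.im ⁻¹' Set.Ioo (-(α * Real.pi / 2)) (α * Real.pi / 2)) := by
  have hpi : α * Real.pi / 2 ≤ Real.pi := by nlinarith [Real.pi_pos]
  ext z
  constructor
  · rintro ⟨hz, harg⟩
    refine ⟨Complex.log z, ?_, Complex.exp_log hz⟩
    have := abs_lt.mp harg
    simpa [Complex.log_im, Set.mem_Ioo] using this
  · rintro ⟨w, hw, rfl⟩
    simp only [Set.mem_preimage, Set.mem_Ioo] at hw
    refine ⟨Complex.exp_ne_zero w, ?_⟩
    have h1 : -Real.pi < w.im := lt_of_le_of_lt (by linarith) hw.1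
    have h2 : w.im ≤ Real.pi := le_of_lt (lt_of_lt_of_le hw.2 hpi)
    have h3 : Complex.arg (Complex.exp w) = w.im := by
      rw [← Complex.log_im (Complex.exp w), Complex.log_exp h1 h2]
    rw [h3, abs_lt]
    exact ⟨hw.1, hw.2⟩

lemma isOpen_sector {α : ℝ} (hα : 0 < α) (hα2 : α ≤ 2) : IsOpen (Sector α) := by
  rw [sector_eq hα hα2]
  exact Complex.isOpenMap_exp _ (isOpen_Ioo.preimage Complex.continuous_im)

lemma isPreconnected_sector {α : ℝ} (hα : 0 < α) (hα2 : α ≤ 2) :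
    IsPreconnected (Sector α) := by
  rw [sector_eq hα hα2]
  refine IsPreconnected.image ?_ _ Complex.continuous_exp.continuousOn
  have hcv : Convex ℝ (Complex.im ⁻¹' Set.Ioo (-(α * Real.pi / 2)) (α * Real.pi / 2)) :=
    (convex_Ioo _ _).linear_preimage Complex.imLm
  exact hcv.isPreconnected

lemma real_mem_sector {α : ℝ} (hα : 0 < α) {t : ℝ} (ht : 0 < t) : (t : ℂ) ∈ Sector α := by
  refine ⟨by exact_mod_cast ht.ne', ?_⟩
  rw [Complex.arg_ofReal_of_nonneg ht.le, abs_zero]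
  have := Real.pi_pos
  positivity

lemma one_mem_sector {α : ℝ} (hα : 0 < α) : (1 : ℂ) ∈ Sector α := by
  simpa using real_mem_sector hα one_pos

lemma smul_mem_sector {α : ℝ} {r : ℝ} (hr : 0 < r) {z : ℂ} (hz : z ∈ Sector α) :
    (r : ℂ) * z ∈ Sector α := by
  refine ⟨mul_ne_zero (by exact_mod_cast hr.ne') hz.1, ?_⟩
  rw [Complex.arg_real_mul _ hr]
  exact hz.2

lemma zero_mem_closure_sector {α : ℝ} (hα : 0 < α) : (0 : ℂ) ∈ closure (Sector α) := by
  have h1 := (Complex.continuous_ofReal.tendsto (0 : ℝ)).comp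
    tendsto_one_div_add_atTop_nhds_zero_nat
  rw [Complex.ofReal_zero] at h1
  refine mem_closure_of_tendsto h1 ?_
  filter_upwards with n
  exact real_mem_sector hα (by positivity)

lemma neBot_sector {α : ℝ} (hα : 0 < α) : (nhdsWithin 0 (Sector α)).NeBot :=
  mem_closure_iff_nhdsWithin_neBot.mp (zero_mem_closure_sector hα)

lemma itdW_open {g : ℂ → ℂ} {s : Set ℂ} (hs : IsOpen s) (n : ℕ) :
    ∀ x ∈ s, iteratedDerivWithin n g s x = iteratedDeriv n g x := by
  induction n with
  | zero => intro x _; simp [iteratedDerivWithin_zero, iteratedDeriv_zero]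
  | succ n IH =>
    intro x hx
    rw [iteratedDerivWithin_succ, iteratedDeriv_succ,
      derivWithin_of_isOpen hs hx]
    exact Filter.EventuallyEq.deriv_eq (Filter.eventuallyEq_of_mem (hs.mem_nhds hx) IH)

end Stmt5Aux

/-- if the moduli of the boundary derivatives of `f` are equivalent to `L`, then
those of `T_M(f)` (which equal `R_j·|f^{(j)}(0)|`) are equivalent to `LM`, and `T_M(f)` is
characteristic in `A_{{LM}}(S_α)`. -/
theorem stmt_5 (M : ℕ → ℝ) (hMpos : ∀ j, 0 < M j) (hM0 : M 0 = 1) (hMlc : IsLogConvexSeq M)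
    (L : ℕ → ℝ) (hLpos : ∀ j, 0 < L j) (hL0 : L 0 = 1)
    (α : ℝ) (hα : 0 < α) (hα2 : α ≤ 2)
    (f : ℂ → ℂ) (hf : f ∈ ASet L α)
    (c : ℕ → ℂ)
    (hc : ∀ j : ℕ, Filter.Tendsto (iteratedDerivWithin j f (Sector α))
      (nhdsWithin 0 (Sector α)) (nhds (c j)))
    (hceq : SeqEquiv (fun j => ‖c j‖) L) :
    (∀ j : ℕ, Filter.Tendsto (iteratedDerivWithin j (Ttrans M f) (Sector α))
      (nhdsWithin 0 (Sector α)) (nhds ((Rseq M j : ℂ) * c j))) ∧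
    SeqEquiv (fun j => Rseq M j * ‖c j‖) (fun j => L j * M j) ∧
    Characteristic (fun j => L j * M j) α (Ttrans M f) := by
  classical
  obtain ⟨hfd, h, hh, C, hC⟩ := hf
  obtain ⟨A, hA, B, hB, hAB⟩ := hceq
  set S := Sector α with hS
  have hSopen : IsOpen S := Stmt5Aux.isOpen_sector hα hα2
  have hSconn : IsPreconnected S := Stmt5Aux.isPreconnected_sector hα hα2
  have h1S : (1:ℂ) ∈ S := Stmt5Aux.one_mem_sector hα
  haveI hNB : (nhdsWithin (0:ℂ) S).NeBot := Stmt5Aux.neBot_sector hα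
  have hqpos : ∀ n, 0 < quotSeq M n := Stmt5Aux.quot_pos hMpos
  have hapos : ∀ n, 0 < coefT M n := Stmt5Aux.coefT_pos hMpos
  have hkey : ∀ n j, coefT M n * quotSeq M n ^ j ≤ (1/2:ℝ)^n * M j :=
    Stmt5Aux.key hMpos hM0 hMlc
  have hRpos : ∀ j, 0 < Rseq M j := Stmt5Aux.Rseq_pos hMpos hM0 hMlc
  -- bound on global iterated derivative of f
  have hfb : ∀ j, ∀ z ∈ S, ‖iteratedDeriv j f z‖ ≤ C * h ^ j * L j := by
    intro j z hz
    rw [← Stmt5Aux.itdW_open hSopen j z hz]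
    exact hC j z hz
  -- analyticity of iterated derivatives of f on S
  have hAn : ∀ j, AnalyticOnNhd ℂ (iteratedDeriv j f) S := by
    intro j
    induction j with
    | zero =>
      rw [iteratedDeriv_zero]
      exact (Complex.analyticOnNhd_iff_differentiableOn hSopen).mpr hfd
    | succ j IH =>
      rw [iteratedDeriv_succ]
      exact IH.deriv
  have hDer : ∀ j, ∀ z ∈ S, HasDerivAt (iteratedDeriv j f) (iteratedDeriv (j+1) f z) z := by
    intro j z hz
    have := ((hAn j z hz).differentiableAt).hasDerivAt
    rwa [← iteratedDeriv_succ] at this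
  set F : ℕ → ℂ → ℂ := fun j z =>
    ∑' n : ℕ, ((coefT M n * quotSeq M n ^ j : ℝ) : ℂ)
      * iteratedDeriv j f ((quotSeq M n : ℝ) * z) with hF
  have hterm_hasDeriv : ∀ j n, ∀ y ∈ S,
      HasDerivAt (fun z => ((coefT M n * quotSeq M n ^ j : ℝ):ℂ)
          * iteratedDeriv j f ((quotSeq M n : ℝ) * z))
        (((coefT M n * quotSeq M n ^ (j+1) : ℝ):ℂ)
          * iteratedDeriv (j+1) f ((quotSeq M n : ℝ) * y)) y := by
    intro j n y hy
    have hmul : HasDerivAt (fun z : ℂ => ((quotSeq M n : ℝ):ℂ) * z) ((quotSeq M n : ℝ):ℂ) y := by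
      simpa using (hasDerivAt_id y).const_mul ((quotSeq M n : ℝ):ℂ)
    have hin : ((quotSeq M n : ℝ):ℂ) * y ∈ S := Stmt5Aux.smul_mem_sector (hqpos n) hy
    have hcomp := ((hDer j _ hin).comp y hmul).const_mul ((coefT M n * quotSeq M n ^ j : ℝ):ℂ)
    refine hcomp.congr_deriv ?_
    push_cast
    ring
  have hterm_bound : ∀ j n, ∀ y ∈ S,
      ‖((coefT M n * quotSeq M n ^ j : ℝ):ℂ) * iteratedDeriv j f ((quotSeq M n : ℝ) * y)‖
        ≤ (1/2:ℝ)^n * (M j * (C * h ^ j * L j)) := by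
    intro j n y hy
    rw [norm_mul, Complex.norm_real, Real.norm_eq_abs,
      abs_of_pos (mul_pos (hapos n) (pow_pos (hqpos n) j))]
    calc coefT M n * quotSeq M n ^ j * ‖iteratedDeriv j f ((quotSeq M n : ℝ) * y)‖
        ≤ ((1/2:ℝ)^n * M j) * (C * h ^ j * L j) := by
          refine mul_le_mul (hkey n j) (hfb j _ (Stmt5Aux.smul_mem_sector (hqpos n) hy))
            (norm_nonneg _) (mul_nonneg (by positivity) (hMpos j).le)
      _ = (1/2:ℝ)^n * (M j * (C * h ^ j * L j)) := by ring
  have hsum_u : ∀ j, Summable (fun n : ℕ => (1/2:ℝ)^n * (M j * (C * h ^ j * L j))) :=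
    fun j => summable_geometric_two.mul_right _
  have hsum_at : ∀ j, ∀ y ∈ S,
      Summable (fun n : ℕ => ((coefT M n * quotSeq M n ^ j : ℝ):ℂ)
        * iteratedDeriv j f ((quotSeq M n : ℝ) * y)) := by
    intro j y hy
    exact Summable.of_norm_bounded (hsum_u j) (fun n => hterm_bound j n y hy)
  have hasD : ∀ j, ∀ z ∈ S, HasDerivAt (F j) (F (j+1) z) z := by
    intro j z hz
    exact hasDerivAt_tsum_of_isPreconnected (hsum_u (j+1)) hSopen hSconn
      (fun n y hy => hterm_hasDeriv j n y hy)
      (fun n y hy => hterm_bound (j+1) n y hy) h1S (hsum_at j 1 h1S) hz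
  have hTeq : Ttrans M f = F 0 := by
    funext z
    simp only [hF, Ttrans]
    refine tsum_congr fun n => ?_
    rw [iteratedDeriv_zero, pow_zero, mul_one]
  have hitdT : ∀ j, ∀ z ∈ S, iteratedDeriv j (Ttrans M f) z = F j z := by
    intro j
    induction j with
    | zero => intro z _; rw [iteratedDeriv_zero, hTeq]
    | succ j IH =>
      intro z hz
      rw [iteratedDeriv_succ]
      have h1 : deriv (iteratedDeriv j (Ttrans M f)) z = deriv (F j) z :=
        Filter.EventuallyEq.deriv_eq (Filter.eventuallyEq_of_mem (hSopen.mem_nhds hz) IH)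
      rw [h1, (hasD j z hz).deriv]
  have hFb : ∀ j, ∀ z ∈ S, ‖F j z‖ ≤ (2*C) * h ^ j * (L j * M j) := by
    intro j z hz
    have hsn : Summable (fun n : ℕ =>
        ‖((coefT M n * quotSeq M n ^ j : ℝ):ℂ)
          * iteratedDeriv j f ((quotSeq M n : ℝ) * z)‖) :=
      Summable.of_nonneg_of_le (fun n => norm_nonneg _) (fun n => hterm_bound j n z hz) (hsum_u j)
    calc ‖F j z‖ ≤ ∑' n : ℕ, ‖((coefT M n * quotSeq M n ^ j : ℝ):ℂ)
          * iteratedDeriv j f ((quotSeq M n : ℝ) * z)‖ := norm_tsum_le_tsum_norm hsn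
      _ ≤ ∑' n : ℕ, (1/2:ℝ)^n * (M j * (C * h ^ j * L j)) :=
          Summable.tsum_le_tsum (fun n => hterm_bound j n z hz) hsn (hsum_u j)
      _ = (∑' n : ℕ, (1/2:ℝ)^n) * (M j * (C * h ^ j * L j)) := tsum_mul_right
      _ = (2*C) * h ^ j * (L j * M j) := by rw [tsum_geometric_two]; ring
  -- Part 1
  have hconc1 : ∀ j : ℕ, Filter.Tendsto (iteratedDerivWithin j (Ttrans M f) S)
      (nhdsWithin 0 S) (nhds ((Rseq M j : ℂ) * c j)) := by
    intro j
    have hFt : Filter.Tendsto (fun z : ℂ => ∑' n : ℕ,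
        ((coefT M n * quotSeq M n ^ j : ℝ):ℂ) * iteratedDeriv j f ((quotSeq M n : ℝ) * z))
        (nhdsWithin 0 S)
        (nhds (∑' n : ℕ, ((coefT M n * quotSeq M n ^ j : ℝ):ℂ) * c j)) := by
      refine tendsto_tsum_of_dominated_convergence (hsum_u j) (fun n => ?_) ?_
      · have hmm : Filter.Tendsto (fun z : ℂ => ((quotSeq M n : ℝ):ℂ) * z)
            (nhdsWithin 0 S) (nhdsWithin 0 S) := by
          rw [tendsto_nhdsWithin_iff]
          constructor
          · have h0 : Filter.Tendsto (fun z : ℂ => ((quotSeq M n : ℝ):ℂ) * z)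
                (nhds 0) (nhds 0) := by
              simpa using (continuous_mul_left ((quotSeq M n : ℝ):ℂ)).tendsto (0:ℂ)
            exact h0.mono_left nhdsWithin_le_nhds
          · filter_upwards [self_mem_nhdsWithin] with z hz
            exact Stmt5Aux.smul_mem_sector (hqpos n) hz
        have hcd : Filter.Tendsto (iteratedDeriv j f) (nhdsWithin 0 S) (nhds (c j)) := by
          refine (hc j).congr' ?_
          filter_upwards [self_mem_nhdsWithin] with z hz
          exact Stmt5Aux.itdW_open hSopen j z hz
        exact (hcd.comp hmm).const_mul _
      · filter_upwards [self_mem_nhdsWithin] with z hz n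
        exact hterm_bound j n z hz
    have hval : (∑' n : ℕ, ((coefT M n * quotSeq M n ^ j : ℝ):ℂ) * c j)
        = (Rseq M j : ℂ) * c j := by
      rw [tsum_mul_right, ← Complex.ofReal_tsum]
      rfl
    rw [hval] at hFt
    refine hFt.congr' ?_
    filter_upwards [self_mem_nhdsWithin] with z hz
    exact ((Stmt5Aux.itdW_open hSopen j z hz).trans (hitdT j z hz)).symm
  -- lower estimate L j * M j ≤ A * (2B)^j * (Rseq j * ‖c j‖)
  have hMle : ∀ j, M j ≤ 2^j * Rseq M j := by
    intro j
    have h1 := Stmt5Aux.Rseq_ge hMpos hM0 hMlc j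
    have h2 : (0:ℝ) < 2^j := by positivity
    calc M j = 2^j * ((1/2:ℝ)^j * M j) := by
          rw [one_div, inv_pow, ← mul_assoc, mul_inv_cancel₀ h2.ne', one_mul]
      _ ≤ 2^j * Rseq M j := mul_le_mul_of_nonneg_left h1 h2.le
  have hlow : ∀ j, L j * M j ≤ A * (2*B)^j * (Rseq M j * ‖c j‖) := by
    intro j
    have h1 : L j * M j ≤ (A * B^j * ‖c j‖) * (2^j * Rseq M j) := by
      exact mul_le_mul (hAB j).2 (hMle j) (hMpos j).le
        (mul_nonneg (mul_nonneg hA.le (pow_nonneg hB.le j)) (norm_nonneg _))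
    calc L j * M j ≤ (A * B^j * ‖c j‖) * (2^j * Rseq M j) := h1
      _ = A * (2*B)^j * (Rseq M j * ‖c j‖) := by rw [mul_pow]; ring
  -- Part 2
  have hconc2 : SeqEquiv (fun j => Rseq M j * ‖c j‖) (fun j => L j * M j) := by
    refine ⟨2*A, by linarith, 2*B, by linarith, fun j => ?_⟩
    constructor
    · have h1 : Rseq M j * ‖c j‖ ≤ (2 * M j) * (A * B^j * L j) := by
        exact mul_le_mul (Stmt5Aux.Rseq_le hMpos hM0 hMlc j) (hAB j).1 (norm_nonneg _)
          (by linarith [hMpos j])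
      have h2 : (B:ℝ)^j ≤ (2*B)^j := pow_le_pow_left₀ hB.le (by linarith) j
      calc Rseq M j * ‖c j‖ ≤ (2 * M j) * (A * B^j * L j) := h1
        _ = (2*A) * B^j * (L j * M j) := by ring
        _ ≤ (2*A) * (2*B)^j * (L j * M j) := by
            have h3 : (0:ℝ) ≤ L j * M j := mul_nonneg (hLpos j).le (hMpos j).le
            have h4 : (0:ℝ) ≤ 2*A := by linarith
            have := mul_le_mul_of_nonneg_left h2 h4
            exact mul_le_mul_of_nonneg_right this h3
    · calc L j * M j ≤ A * (2*B)^j * (Rseq M j * ‖c j‖) := hlow j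
        _ ≤ (2*A) * (2*B)^j * (Rseq M j * ‖c j‖) := by
            have h3 : (0:ℝ) ≤ (2*B)^j * (Rseq M j * ‖c j‖) :=
              mul_nonneg (pow_nonneg (by linarith) j)
                (mul_nonneg (hRpos j).le (norm_nonneg _))
            nlinarith [h3, hA]
  -- membership of the transform
  have memLM : Ttrans M f ∈ ASet (fun j => L j * M j) α := by
    refine ⟨?_, h, hh, 2*C, ?_⟩
    · rw [hTeq]
      intro z hz
      exact (hasD 0 z hz).differentiableAt.differentiableWithinAt
    · intro j z hz
      rw [Stmt5Aux.itdW_open hSopen j z hz, hitdT j z hz]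
      exact hFb j z hz
  refine ⟨hconc1, hconc2, memLM, ?_⟩
  -- characteristic property
  intro N hNpos hN0 hTN hsub
  refine Set.Subset.antisymm hsub ?_
  obtain ⟨hTd, h', hh', C', hC'⟩ := hTN
  have hlim : ∀ j, Rseq M j * ‖c j‖ ≤ C' * h'^j * N j := by
    intro j
    have h1 : Filter.Tendsto (fun z => ‖iteratedDerivWithin j (Ttrans M f) S z‖)
        (nhdsWithin 0 S) (nhds ‖(Rseq M j : ℂ) * c j‖) := (hconc1 j).norm
    have h2 : ∀ᶠ z in nhdsWithin (0:ℂ) S,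
        ‖iteratedDerivWithin j (Ttrans M f) S z‖ ≤ C' * h'^j * N j := by
      filter_upwards [self_mem_nhdsWithin] with z hz
      exact hC' j z hz
    have h3 := le_of_tendsto h1 h2
    rwa [norm_mul, Complex.norm_real, Real.norm_eq_abs, abs_of_pos (hRpos j)] at h3
  have hC'0 : 0 ≤ C' := by
    have h1 := hlim 0
    have h2 : (0:ℝ) ≤ Rseq M 0 * ‖c 0‖ := mul_nonneg (hRpos 0).le (norm_nonneg _)
    have h3 := le_trans h2 h1
    rw [pow_zero, hN0, mul_one, mul_one] at h3
    exact h3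
  have hLMN : ∀ j, L j * M j ≤ (A * C') * (2*B*h')^j * N j := by
    intro j
    calc L j * M j ≤ A * (2*B)^j * (Rseq M j * ‖c j‖) := hlow j
      _ ≤ A * (2*B)^j * (C' * h'^j * N j) := by
          refine mul_le_mul_of_nonneg_left (hlim j) ?_
          exact mul_nonneg hA.le (pow_nonneg (by linarith) j)
      _ = (A * C') * (2*B*h')^j * N j := by rw [mul_pow]; ring
  intro g hg
  obtain ⟨hgd, hg2, hhg2, C2, hC2⟩ := hg
  have hC20 : 0 ≤ C2 := by
    have h1 := hC2 0 1 h1S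
    have h3 := le_trans (norm_nonneg (iteratedDerivWithin 0 g S 1)) h1
    simp only [pow_zero, hL0, hM0, mul_one, one_mul] at h3
    exact h3
  refine ⟨hgd, hg2 * (2*B*h'), mul_pos hhg2 (mul_pos (mul_pos two_pos hB) hh'), C2 * (A * C'), ?_⟩
  intro j z hz
  calc ‖iteratedDerivWithin j g S z‖ ≤ C2 * hg2^j * (L j * M j) := hC2 j z hz
    _ ≤ C2 * hg2^j * ((A * C') * (2*B*h')^j * N j) := by
        refine mul_le_mul_of_nonneg_left (hLMN j) ?_
        exact mul_nonneg hC20 (pow_nonneg hhg2.le j)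
    _ = C2 * (A * C') * (hg2 * (2*B*h'))^j * N j := by rw [mul_pow]; ring
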